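/- Let a(z) = ∑_j a_j z^j be a Laurent polynomial with finitely many nonzero complex coefficients, z₀ ∈ ℂ∖{0}, p ∈ ℝ, and τ ≥ 1. Suppose for all r = 0,…,τ−1 the 'sub-symbol' identities hold: ∑_j a_{2j}(2j)^r z₀^{2j} = p^r c, ∑_j a_{2j+1}(2j)^r z₀^{2j+1} = (p−1)^r c, where c = z₀^p (a fixed nonzero constant). Then for r = 0,…,τ−1: z₀^r · a^{(r)}(z₀) = 2c ∏_{i=0}^{r−1}(p−i), i.e. the r-th derivative satisfies a^{(r)}(z₀) = 2 c z₀^{−r} ∏_{i=0}^{r−1}(p−i). -/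

import Mathlib

open Finset

-- linear combination lemma
lemma lin_aux (τ : ℕ) (c : ℂ) (T : Finset ℤ) (b : ℤ → ℂ) (w : ℂ)
    (hmom : ∀ m < τ, ∑ k ∈ T, b k * ((2*k : ℤ) : ℂ) ^ m = w ^ m * c)
    (f : Polynomial ℂ) (hf : f.natDegree < τ) :
    ∑ k ∈ T, b k * f.eval ((2*k : ℤ) : ℂ) = f.eval w * c := by
  have key : ∀ x : ℂ, f.eval x = ∑ i ∈ range τ, f.coeff i * x ^ i := fun x =>
    Polynomial.eval_eq_sum_range' hf x
  calc ∑ k ∈ T, b k * f.eval ((2*k : ℤ) : ℂ)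
      = ∑ k ∈ T, ∑ i ∈ range τ, f.coeff i * (b k * ((2*k : ℤ) : ℂ) ^ i) := by
        refine Finset.sum_congr rfl fun k _ => ?_
        rw [key, Finset.mul_sum]
        exact Finset.sum_congr rfl fun i _ => by ring
    _ = ∑ i ∈ range τ, f.coeff i * ∑ k ∈ T, b k * ((2*k : ℤ) : ℂ) ^ i := by
        rw [Finset.sum_comm]
        exact Finset.sum_congr rfl fun i _ => by rw [Finset.mul_sum]
    _ = ∑ i ∈ range τ, f.coeff i * (w ^ i * c) := by
        refine Finset.sum_congr rfl fun i hi => ?_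
        rw [hmom i (Finset.mem_range.mp hi)]
    _ = f.eval w * c := by rw [key w, Finset.sum_mul]; exact Finset.sum_congr rfl fun i _ => by ring

lemma deriv_formula (M : ℕ) (a : ℤ → ℂ) (A : ℂ → ℂ)
    (hA : A = fun z : ℂ => ∑ j ∈ Finset.Icc (-(M : ℤ)) M, a j * z ^ j)
    (r : ℕ) :
    ∀ z : ℂ, z ≠ 0 → iteratedDeriv r A z
      = ∑ j ∈ Finset.Icc (-(M : ℤ)) M,
          a j * (∏ q ∈ range r, ((j : ℂ) - q)) * z ^ (j - (r : ℤ)) := by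
  induction r with
  | zero =>
    intro z hz
    simp [hA, iteratedDeriv_zero]
  | succ r ih =>
    intro z hz
    rw [iteratedDeriv_succ]
    have hev : iteratedDeriv r A =ᶠ[nhds z]
        fun w => ∑ j ∈ Finset.Icc (-(M : ℤ)) M,
          a j * (∏ q ∈ range r, ((j : ℂ) - q)) * w ^ (j - (r : ℤ)) := by
      filter_upwards [isOpen_ne.mem_nhds hz] with w hw
      exact ih w hw
    rw [hev.deriv_eq]
    have hd : HasDerivAt
        (fun w => ∑ j ∈ Finset.Icc (-(M : ℤ)) M,
          a j * (∏ q ∈ range r, ((j : ℂ) - q)) * w ^ (j - (r : ℤ)))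
        (∑ j ∈ Finset.Icc (-(M : ℤ)) M,
          a j * (∏ q ∈ range r, ((j : ℂ) - q)) * ((↑(j - (r : ℤ)) : ℂ) * z ^ (j - (r : ℤ) - 1))) z := by
      refine HasDerivAt.fun_sum fun j _ => ?_
      exact (hasDerivAt_zpow (j - (r : ℤ)) z (Or.inl hz)).const_mul _
    rw [hd.deriv]
    refine Finset.sum_congr rfl fun j _ => ?_
    rw [prod_range_succ, show (j - (r : ℤ) - 1) = j - ((r + 1 : ℕ) : ℤ) by push_cast; ring]
    push_cast
    ring

theorem stmt8 (M : ℕ) (a : ℤ → ℂ)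
    (hsupp : ∀ j : ℤ, a j ≠ 0 → j ∈ Finset.Icc (-(M : ℤ)) M)
    (A : ℂ → ℂ)
    (hA : A = fun z : ℂ => ∑ j ∈ Finset.Icc (-(M : ℤ)) M, a j * z ^ j)
    (z₀ : ℂ) (hz₀ : z₀ ≠ 0) (p : ℝ) (τ : ℕ) (hτ : 1 ≤ τ)
    (c : ℂ) (hc : c ≠ 0)
    (heven : ∀ r < τ,
      ∑ j ∈ Finset.Icc (-(M : ℤ)) M,
          a (2 * j) * ((2 * j : ℤ) : ℂ) ^ r * z₀ ^ (2 * j) = (p : ℂ) ^ r * c)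
    (hodd : ∀ r < τ,
      ∑ j ∈ Finset.Icc (-(M : ℤ)) M,
          a (2 * j + 1) * ((2 * j : ℤ) : ℂ) ^ r * z₀ ^ (2 * j + 1) = ((p : ℂ) - 1) ^ r * c) :
    ∀ r < τ,
      iteratedDeriv r A z₀
        = 2 * c * z₀ ^ (-(r : ℤ)) * ∏ i ∈ Finset.range r, ((p : ℂ) - (i : ℂ)) := by
  intro r hr
  set T : Finset ℤ := Finset.Icc (-(M : ℤ)) M with hT
  -- even/odd split of a general weighted sum
  have split : ∀ g : ℤ → ℂ, ∑ j ∈ T, a j * g j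
      = ∑ k ∈ T, a (2*k) * g (2*k) + ∑ k ∈ T, a (2*k+1) * g (2*k+1) := by
    intro g
    rw [← Finset.sum_filter_add_sum_filter_not T (fun j => Even j) (fun j => a j * g j)]
    congr 1
    · rw [show ∑ k ∈ T, a (2*k) * g (2*k)
        = ∑ k ∈ T.filter (fun k => 2*k ∈ T), a (2*k) * g (2*k) from
        (Finset.sum_subset (Finset.filter_subset _ _) (fun k hk hk' => by
          by_contra h
          have ha : a (2*k) ≠ 0 := fun h0 => h (by rw [h0]; ring)
          exact hk' (Finset.mem_filter.mpr ⟨hk, hsupp _ ha⟩))).symm]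
      refine Finset.sum_bij' (fun j _ => j / 2) (fun k _ => 2*k) ?_ ?_ ?_ ?_ ?_
      · intro j hj
        obtain ⟨hj1, hj2⟩ := Finset.mem_filter.mp hj
        have h2 : j % 2 = 0 := Int.even_iff.mp hj2
        have hj1' : -(M : ℤ) ≤ j ∧ j ≤ M := Finset.mem_Icc.mp hj1
        refine Finset.mem_filter.mpr ⟨Finset.mem_Icc.mpr (by omega), ?_⟩
        rw [show 2 * (j/2) = j by omega]
        exact hj1
      · intro k hk
        obtain ⟨hk1, hk2⟩ := Finset.mem_filter.mp hk
        exact Finset.mem_filter.mpr ⟨hk2, ⟨k, two_mul k⟩⟩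
      · intro j hj
        obtain ⟨_, hj2⟩ := Finset.mem_filter.mp hj
        have h2 : j % 2 = 0 := Int.even_iff.mp hj2
        omega
      · intro k _
        omega
      · intro j hj
        obtain ⟨_, hj2⟩ := Finset.mem_filter.mp hj
        have h2 : j % 2 = 0 := Int.even_iff.mp hj2
        rw [show 2 * (j/2) = j by omega]
    · rw [show ∑ k ∈ T, a (2*k+1) * g (2*k+1)
        = ∑ k ∈ T.filter (fun k => 2*k+1 ∈ T), a (2*k+1) * g (2*k+1) from
        (Finset.sum_subset (Finset.filter_subset _ _) (fun k hk hk' => by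
          by_contra h
          have ha : a (2*k+1) ≠ 0 := fun h0 => h (by rw [h0]; ring)
          exact hk' (Finset.mem_filter.mpr ⟨hk, hsupp _ ha⟩))).symm]
      refine Finset.sum_bij' (fun j _ => j / 2) (fun k _ => 2*k+1) ?_ ?_ ?_ ?_ ?_
      · intro j hj
        obtain ⟨hj1, hj2⟩ := Finset.mem_filter.mp hj
        rw [Int.not_even_iff_odd] at hj2
        have h2 : j % 2 = 1 := Int.odd_iff.mp hj2
        have hj1' : -(M : ℤ) ≤ j ∧ j ≤ M := Finset.mem_Icc.mp hj1
        refine Finset.mem_filter.mpr ⟨Finset.mem_Icc.mpr (by omega), ?_⟩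
        rw [show 2 * (j/2) + 1 = j by omega]
        exact hj1
      · intro k hk
        obtain ⟨hk1, hk2⟩ := Finset.mem_filter.mp hk
        refine Finset.mem_filter.mpr ⟨hk2, ?_⟩
        simp only [Int.not_even_iff_odd]
        exact ⟨k, rfl⟩
      · intro j hj
        obtain ⟨_, hj2⟩ := Finset.mem_filter.mp hj
        rw [Int.not_even_iff_odd] at hj2
        have h2 : j % 2 = 1 := Int.odd_iff.mp hj2
        omega
      · intro k _
        omega
      · intro j hj
        obtain ⟨_, hj2⟩ := Finset.mem_filter.mp hj
        rw [Int.not_even_iff_odd] at hj2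
        have h2 : j % 2 = 1 := Int.odd_iff.mp hj2
        rw [show 2 * (j/2) + 1 = j by omega]
  -- even moments
  have heven' : ∑ k ∈ T, (a (2*k) * z₀ ^ (2*k)) * (∏ q ∈ range r, (((2*k : ℤ) : ℂ) - q))
      = (∏ q ∈ range r, ((p : ℂ) - q)) * c := by
    have hf : (∏ q ∈ range r, (Polynomial.X - Polynomial.C ((q : ℂ)))).natDegree < τ := by
      refine lt_of_le_of_lt (le_trans (Polynomial.natDegree_prod_le _ _) ?_) hr
      refine le_trans (Finset.sum_le_sum fun q _ => (Polynomial.natDegree_X_sub_C _).le) ?_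
      simp
    have := lin_aux τ c T (fun k => a (2*k) * z₀ ^ (2*k)) (p : ℂ)
      (fun m hm => by
        rw [← heven m hm]
        exact Finset.sum_congr rfl fun k _ => by ring)
      _ hf
    simpa [Polynomial.eval_prod] using this
  -- odd moments
  have hodd' : ∑ k ∈ T, (a (2*k+1) * z₀ ^ (2*k+1)) * (∏ q ∈ range r, (((2*k+1 : ℤ) : ℂ) - q))
      = (∏ q ∈ range r, ((p : ℂ) - q)) * c := by
    have hf : (∏ q ∈ range r, (Polynomial.X - Polynomial.C ((q : ℂ) - 1))).natDegree < τ := by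
      refine lt_of_le_of_lt (le_trans (Polynomial.natDegree_prod_le _ _) ?_) hr
      refine le_trans (Finset.sum_le_sum fun q _ => (Polynomial.natDegree_X_sub_C _).le) ?_
      simp
    have := lin_aux τ c T (fun k => a (2*k+1) * z₀ ^ (2*k+1)) ((p : ℂ) - 1)
      (fun m hm => by
        rw [← hodd m hm]
        exact Finset.sum_congr rfl fun k _ => by ring)
      _ hf
    simp only [Polynomial.eval_prod] at this
    simp only [Polynomial.eval_sub, Polynomial.eval_X, Polynomial.eval_C] at this
    calc ∑ k ∈ T, (a (2*k+1) * z₀ ^ (2*k+1)) * (∏ q ∈ range r, (((2*k+1 : ℤ) : ℂ) - q))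
        = ∑ k ∈ T, (a (2*k+1) * z₀ ^ (2*k+1)) * (∏ q ∈ range r, (((2*k : ℤ) : ℂ) - ((q : ℂ) - 1))) := by
          refine Finset.sum_congr rfl fun k _ => ?_
          congr 1
          refine Finset.prod_congr rfl fun q _ => ?_
          push_cast; ring
      _ = (∏ q ∈ range r, ((p : ℂ) - 1 - ((q : ℂ) - 1))) * c := this
      _ = (∏ q ∈ range r, ((p : ℂ) - q)) * c := by
          congr 1
          exact Finset.prod_congr rfl fun q _ => by ring
  -- put it together
  rw [deriv_formula M a A hA r z₀ hz₀]
  have step1 : ∑ j ∈ T, a j * (∏ q ∈ range r, ((j : ℂ) - q)) * z₀ ^ (j - (r : ℤ))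
      = z₀ ^ (-(r : ℤ)) * ∑ j ∈ T, a j * ((∏ q ∈ range r, ((j : ℂ) - q)) * z₀ ^ (j : ℤ)) := by
    rw [Finset.mul_sum]
    refine Finset.sum_congr rfl fun j _ => ?_
    rw [show j - (r : ℤ) = -(r : ℤ) + j by ring, zpow_add₀ hz₀]
    ring
  rw [step1, split (fun j => (∏ q ∈ range r, ((j : ℂ) - q)) * z₀ ^ (j : ℤ))]
  have e1 : ∑ k ∈ T, a (2*k) * ((∏ q ∈ range r, (((2*k : ℤ) : ℂ) - q)) * z₀ ^ (2*k : ℤ))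
      = (∏ q ∈ range r, ((p : ℂ) - q)) * c := by
    rw [← heven']
    exact Finset.sum_congr rfl fun k _ => by ring
  have e2 : ∑ k ∈ T, a (2*k+1) * ((∏ q ∈ range r, (((2*k+1 : ℤ) : ℂ) - q)) * z₀ ^ (2*k+1 : ℤ))
      = (∏ q ∈ range r, ((p : ℂ) - q)) * c := by
    rw [← hodd']
    exact Finset.sum_congr rfl fun k _ => by ring
  rw [e1, e2]
  ring
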